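/- arXiv:2502.04096 — 4 statements merged into one kernel-verified Lean document; each statement's English description precedes it below -/
import Mathlib

section
/- For bounded linear operators T₁, T₂ on a complex Hilbert space H and q in the closed unit disc, the q-numerical radius of the 2×2 off-diagonal block operator matrix [[0, T₁],[T₂, 0]] on H ⊕ H equals that of [[0, T₂],[T₁, 0]]. -/
noncomputable def qNumRadius {H : Type*} [NormedAddCommGroup H] [InnerProductSpace ℂ H]
    (q : ℂ) (T : H →L[ℂ] H) : ℝ :=
  sSup {r : ℝ | ∃ x y : H, ‖x‖ = 1 ∧ ‖y‖ = 1 ∧ (inner ℂ x y : ℂ) = q ∧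
    r = ‖(inner ℂ (T x) y : ℂ)‖}


noncomputable def blockOp {H : Type*} [NormedAddCommGroup H] [InnerProductSpace ℂ H]
    (A B C D : H →L[ℂ] H) : WithLp 2 (H × H) →L[ℂ] WithLp 2 (H × H) :=
  (WithLp.prodContinuousLinearEquiv 2 ℂ H H).symm.toContinuousLinearMap.comp
    ((((A.comp (ContinuousLinearMap.fst ℂ H H) + B.comp (ContinuousLinearMap.snd ℂ H H)).prod
       (C.comp (ContinuousLinearMap.fst ℂ H H) + D.comp (ContinuousLinearMap.snd ℂ H H)))).comp
      (WithLp.prodContinuousLinearEquiv 2 ℂ H H).toContinuousLinearMap)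

section Aux

variable {H : Type*} [NormedAddCommGroup H] [InnerProductSpace ℂ H]

/-- The coordinate-swap map on the `L²` product. -/
noncomputable def swapL2 (x : WithLp 2 (H × H)) : WithLp 2 (H × H) :=
  (WithLp.equiv 2 (H × H)).symm (x.snd, x.fst)

omit [NormedAddCommGroup H] [InnerProductSpace ℂ H] in
lemma swapL2_fst (x : WithLp 2 (H × H)) : (swapL2 x).fst = x.snd := rfl

omit [NormedAddCommGroup H] [InnerProductSpace ℂ H] in
lemma swapL2_snd (x : WithLp 2 (H × H)) : (swapL2 x).snd = x.fst := rfl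

lemma norm_swapL2 (x : WithLp 2 (H × H)) : ‖swapL2 x‖ = ‖x‖ := by
  rw [WithLp.prod_norm_eq_add (by norm_num), WithLp.prod_norm_eq_add (by norm_num),
    swapL2_fst, swapL2_snd, add_comm]

lemma inner_swapL2 (x y : WithLp 2 (H × H)) :
    (inner ℂ (swapL2 x) (swapL2 y) : ℂ) = inner ℂ x y := by
  simp [WithLp.prod_inner_apply, swapL2_fst, swapL2_snd, add_comm]

lemma blockOp_swap (T₁ T₂ : H →L[ℂ] H) (x : WithLp 2 (H × H)) :
    blockOp 0 T₂ T₁ 0 (swapL2 x) = swapL2 (blockOp 0 T₁ T₂ 0 x) := by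
  simp [blockOp, swapL2]

lemma qSet_subset (T₁ T₂ : H →L[ℂ] H) (q : ℂ) :
    {r : ℝ | ∃ x y : WithLp 2 (H × H), ‖x‖ = 1 ∧ ‖y‖ = 1 ∧ (inner ℂ x y : ℂ) = q ∧
      r = ‖(inner ℂ ((blockOp 0 T₁ T₂ 0) x) y : ℂ)‖} ⊆
    {r : ℝ | ∃ x y : WithLp 2 (H × H), ‖x‖ = 1 ∧ ‖y‖ = 1 ∧ (inner ℂ x y : ℂ) = q ∧
      r = ‖(inner ℂ ((blockOp 0 T₂ T₁ 0) x) y : ℂ)‖} := by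
  rintro r ⟨x, y, hx, hy, hxy, hr⟩
  refine ⟨swapL2 x, swapL2 y, by rw [norm_swapL2, hx], by rw [norm_swapL2, hy],
    by rw [inner_swapL2, hxy], ?_⟩
  rw [blockOp_swap, inner_swapL2, hr]

end Aux

theorem stmt5 {H : Type*} [NormedAddCommGroup H] [InnerProductSpace ℂ H] [CompleteSpace H]
    (T₁ T₂ : H →L[ℂ] H) (q : ℂ) (hq : ‖q‖ ≤ 1) :
    qNumRadius q (blockOp 0 T₁ T₂ 0) = qNumRadius q (blockOp 0 T₂ T₁ 0) := by
  unfold qNumRadius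
  congr 1
  exact le_antisymm (qSet_subset T₁ T₂ q) (qSet_subset T₂ T₁ q)
end

section
/- For bounded linear operators T₁, T₂ on a complex Hilbert space H, any θ ∈ ℝ, and q in the closed unit disc, w_q of the block operator [[0, T₁],[e^{iθ}T₂, 0]] on H ⊕ H equals w_q of [[0, T₁],[T₂, 0]]. -/
lemma blockOp_apply_fst {H : Type*} [NormedAddCommGroup H] [InnerProductSpace ℂ H]
    (A B C D : H →L[ℂ] H) (x : WithLp 2 (H × H)) :
    (blockOp A B C D x).fst = A x.fst + B x.snd := rfl

lemma blockOp_apply_snd {H : Type*} [NormedAddCommGroup H] [InnerProductSpace ℂ H]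
    (A B C D : H →L[ℂ] H) (x : WithLp 2 (H × H)) :
    (blockOp A B C D x).snd = C x.fst + D x.snd := rfl

lemma aux_subset {H : Type*} [NormedAddCommGroup H] [InnerProductSpace ℂ H]
    (T₁ T₂ : H →L[ℂ] H) (q s : ℂ) (hs : ‖s‖ = 1) :
    {r : ℝ | ∃ x y : WithLp 2 (H × H), ‖x‖ = 1 ∧ ‖y‖ = 1 ∧ (inner ℂ x y : ℂ) = q ∧
      r = ‖(inner ℂ ((blockOp 0 T₁ ((s * s) • T₂) 0) x) y : ℂ)‖} ⊆
    {r : ℝ | ∃ x y : WithLp 2 (H × H), ‖x‖ = 1 ∧ ‖y‖ = 1 ∧ (inner ℂ x y : ℂ) = q ∧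
      r = ‖(inner ℂ ((blockOp 0 T₁ T₂ 0) x) y : ℂ)‖} := by
  rintro r ⟨x, y, hx, hy, hxy, hr⟩
  have hcs : (starRingEnd ℂ) s * s = 1 := by
    rw [Complex.conj_mul']
    norm_cast
    simp [hs]
  have hsc : ‖(starRingEnd ℂ) s‖ = 1 := by simpa using hs
  refine ⟨(WithLp.equiv 2 (H × H)).symm (x.fst, (starRingEnd ℂ) s • x.snd),
          (WithLp.equiv 2 (H × H)).symm (y.fst, (starRingEnd ℂ) s • y.snd), ?_, ?_, ?_, ?_⟩
  · rw [WithLp.prod_norm_eq_of_L2]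
    simp only [WithLp.equiv_symm_apply, WithLp.toLp_fst, WithLp.toLp_snd, norm_smul, hsc, one_mul]
    rw [← WithLp.prod_norm_eq_of_L2, hx]
  · rw [WithLp.prod_norm_eq_of_L2]
    simp only [WithLp.equiv_symm_apply, WithLp.toLp_fst, WithLp.toLp_snd, norm_smul, hsc, one_mul]
    rw [← WithLp.prod_norm_eq_of_L2, hy]
  · rw [WithLp.prod_inner_apply]
    simp only [WithLp.ofLp_fst, WithLp.ofLp_snd, WithLp.equiv_symm_apply, WithLp.toLp_fst, WithLp.toLp_snd, inner_smul_left,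
      inner_smul_right, Complex.conj_conj]
    rw [← mul_assoc, hcs, one_mul]
    exact hxy
  · rw [hr, WithLp.prod_inner_apply, WithLp.prod_inner_apply]
    simp only [blockOp_apply_fst, blockOp_apply_snd,
      WithLp.ofLp_fst, WithLp.ofLp_snd, WithLp.equiv_symm_apply, WithLp.toLp_fst, WithLp.toLp_snd, ContinuousLinearMap.zero_apply, zero_add, add_zero,
      ContinuousLinearMap.smul_apply, map_smul, smul_zero, inner_smul_left,
      inner_smul_right, map_mul, Complex.conj_conj]
    set A : ℂ := inner ℂ (T₁ x.snd) y.fst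
    set B : ℂ := inner ℂ (T₂ x.fst) y.snd
    have key : s * A + (starRingEnd ℂ) s * B
        = s * (A + (starRingEnd ℂ) s * ((starRingEnd ℂ) s * B)) := by
      have h2 : s * ((starRingEnd ℂ) s * ((starRingEnd ℂ) s * B)) = (starRingEnd ℂ) s * B := by
        rw [← mul_assoc, mul_comm s ((starRingEnd ℂ) s), hcs, one_mul]
      rw [mul_add, h2]
    rw [key, norm_mul, hs, one_mul, mul_assoc]

theorem stmt6 {H : Type*} [NormedAddCommGroup H] [InnerProductSpace ℂ H] [CompleteSpace H]
    (T₁ T₂ : H →L[ℂ] H) (θ : ℝ) (q : ℂ) (hq : ‖q‖ ≤ 1) :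
    qNumRadius q (blockOp 0 T₁ (Complex.exp (θ * Complex.I) • T₂) 0)
      = qNumRadius q (blockOp 0 T₁ T₂ 0) := by
  unfold qNumRadius
  congr 1
  apply Set.Subset.antisymm
  · have h1 : (Complex.exp ((θ / 2 : ℝ) * Complex.I)) * (Complex.exp ((θ / 2 : ℝ) * Complex.I))
        = Complex.exp (θ * Complex.I) := by
      rw [← Complex.exp_add]
      congr 1
      push_cast
      ring
    have := aux_subset T₁ T₂ q (Complex.exp ((θ / 2 : ℝ) * Complex.I))
      (by rw [Complex.norm_exp]; simp)
    rw [h1] at this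
    exact this
  · have h1 : (Complex.exp ((-θ / 2 : ℝ) * Complex.I)) * (Complex.exp ((-θ / 2 : ℝ) * Complex.I))
        = Complex.exp (-(θ * Complex.I)) := by
      rw [← Complex.exp_add]
      congr 1
      push_cast
      ring
    have h2 : ((Complex.exp ((-θ / 2 : ℝ) * Complex.I) * Complex.exp ((-θ / 2 : ℝ) * Complex.I))
        • (Complex.exp (θ * Complex.I) • T₂)) = T₂ := by
      rw [h1, smul_smul, ← Complex.exp_add]
      simp
    have := aux_subset T₁ (Complex.exp (θ * Complex.I) • T₂) q
      (Complex.exp ((-θ / 2 : ℝ) * Complex.I))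
      (by rw [Complex.norm_exp]; simp)
    rw [h2] at this
    exact this
end

section
/- Let T be a bounded linear operator on a complex Hilbert space with T² = 0 and let q ∈ [0,1). Then w_q(T) ≤ √(1 - 3q²/4 + q√(1-q²)) · ‖T‖. -/
set_option maxHeartbeats 1000000

lemma nil_num_range {H : Type*} [NormedAddCommGroup H] [InnerProductSpace ℂ H]
    (T : H →L[ℂ] H) (hTT : ∀ v, T (T v) = 0) (x : H) (hx : ‖x‖ = 1) :
    ‖(inner ℂ (T x) x : ℂ)‖ ≤ ‖T‖ / 2 := by
  by_cases ha : T x = 0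
  · simp [ha]; positivity
  set a := T x with ha'
  have hna : 0 < ‖a‖ := norm_pos_iff.2 ha
  set c : ℂ := (inner ℂ a x : ℂ) / ((‖a‖:ℂ)^2) with hc
  set w : H := x - c • a with hw
  have hTa : T a = 0 := hTT x
  have hTw : T w = a := by
    simp [hw, map_sub, hTa]
    exact ha'.symm
  have hinner : (inner ℂ a w : ℂ) = 0 := by
    have hself : (inner ℂ a a : ℂ) = (‖a‖:ℂ)^2 := inner_self_eq_norm_sq_to_K a
    have hne : (‖a‖:ℂ) ≠ 0 := by exact_mod_cast hna.ne'
    rw [hw, inner_sub_right, inner_smul_right, hself, hc]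
    field_simp
    simp
  have hpyth : ‖x‖^2 = ‖w‖^2 + ‖c • a‖^2 := by
    have hx' : x = w + c • a := by simp [hw]
    rw [hx', norm_add_sq (𝕜 := ℂ)]
    have : (inner ℂ w (c • a) : ℂ) = 0 := by
      rw [inner_smul_right]
      have : (inner ℂ w a : ℂ) = 0 := by
        rw [← inner_conj_symm, hinner]; simp
      simp [this]
    rw [this]; simp
  set t := ‖(inner ℂ a x : ℂ)‖ with htdef
  have hct : ‖c • a‖ = t / ‖a‖ := by
    rw [norm_smul, hc]
    rw [norm_div]
    simp [htdef]
    field_simp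
  have ht0 : 0 ≤ t := norm_nonneg _
  have hM : ‖a‖ ≤ ‖T‖ * ‖w‖ := by
    calc ‖a‖ = ‖T w‖ := by rw [hTw]
    _ ≤ ‖T‖ * ‖w‖ := T.le_opNorm w
  have hw0 : 0 ≤ ‖w‖ := norm_nonneg _
  have hMpos : 0 < ‖T‖ := by
    by_contra h
    push_neg at h
    have : ‖T‖ = 0 := le_antisymm h (norm_nonneg _)
    nlinarith
  have ht2 : t^2 = ‖a‖^2 - ‖a‖^2 * ‖w‖^2 := by
    have := hpyth
    rw [hx, hct] at this
    have h2 : (t/‖a‖)^2 = t^2/‖a‖^2 := by ring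
    rw [h2] at this
    field_simp at this
    nlinarith
  -- now: ‖a‖ ≤ ‖T‖‖w‖, t² = ‖a‖²(1-‖w‖²), want t ≤ ‖T‖/2
  have hsq : ‖a‖^2 ≤ ‖T‖^2 * ‖w‖^2 := by nlinarith
  have h1 : ‖T‖^2 * t^2 ≤ ‖T‖^2 * (‖T‖^2 / 4) := by
    nlinarith [mul_le_mul_of_nonneg_left hsq (sq_nonneg ‖a‖), sq_nonneg (‖T‖^2 - 2*‖a‖^2)]
  have h2 : t^2 ≤ ‖T‖^2/4 := le_of_mul_le_mul_left h1 (by positivity)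
  nlinarith [h2, sq_nonneg (2*t - ‖T‖), mul_pos hMpos hMpos]


theorem stmt14 {H : Type*} [NormedAddCommGroup H] [InnerProductSpace ℂ H] [CompleteSpace H]
    (T : H →L[ℂ] H) (hT : T ^ 2 = 0) (q : ℝ) (hq0 : 0 ≤ q) (hq1 : q < 1) :
    qNumRadius (q : ℂ) T
      ≤ Real.sqrt (1 - 3 * q ^ 2 / 4 + q * Real.sqrt (1 - q ^ 2)) * ‖T‖ := by
  have hq2 : (0:ℝ) ≤ 1 - q^2 := by nlinarith
  set s := Real.sqrt (1 - q^2) with hs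
  have hs2 : s^2 = 1 - q^2 := Real.sq_sqrt hq2
  have hs0 : 0 ≤ s := Real.sqrt_nonneg _
  have hC : Real.sqrt (1 - 3*q^2/4 + q*s) = q/2 + s := by
    have h : 1 - 3*q^2/4 + q*s = (q/2 + s)^2 := by nlinarith
    rw [h, Real.sqrt_sq (by positivity)]
  rw [hC]
  have hTT : ∀ v, T (T v) = 0 := by
    intro v
    have := congrArg (fun S : H →L[ℂ] H => S v) hT
    simpa [pow_two] using this
  apply Real.sSup_le
  · rintro r ⟨x, y, hx, hy, hxy, rfl⟩
    set z : H := y - (q:ℂ) • x with hz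
    have hzy : (inner ℂ (T x) y : ℂ) = (q:ℂ) * (inner ℂ (T x) x : ℂ) + (inner ℂ (T x) z : ℂ) := by
      rw [hz, inner_sub_right, inner_smul_right]; ring
    have hnz : ‖z‖ ≤ s := by
      have hzsq : ‖z‖^2 = 1 - q^2 := by
        have hnorm := norm_sub_sq (𝕜 := ℂ) y ((q:ℂ) • x)
        have hyx : (inner ℂ y ((q:ℂ) • x) : ℂ) = (q^2 : ℂ) := by
          rw [inner_smul_right, ← inner_conj_symm, hxy]
          simp; ring
        rw [hyx] at hnorm
        rw [← hz] at hnorm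
        have hre : RCLike.re ((q:ℂ) ^ 2) = q ^ 2 := by
          simp [RCLike.re_to_complex, ← Complex.ofReal_pow]
        rw [hnorm, hy, norm_smul, hx, hre, Complex.norm_real, Real.norm_eq_abs,
          abs_of_nonneg hq0]
        ring
      nlinarith [norm_nonneg z]
    have h1 : ‖(inner ℂ (T x) x : ℂ)‖ ≤ ‖T‖ / 2 := nil_num_range T hTT x hx
    have h2 : ‖(inner ℂ (T x) z : ℂ)‖ ≤ ‖T‖ * s := by
      calc ‖(inner ℂ (T x) z : ℂ)‖ ≤ ‖T x‖ * ‖z‖ := norm_inner_le_norm _ _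
      _ ≤ ‖T‖ * s := by
          have := T.le_opNorm x
          rw [hx, mul_one] at this
          exact mul_le_mul this hnz (norm_nonneg _) (norm_nonneg _)
    calc ‖(inner ℂ (T x) y : ℂ)‖ ≤ q * ‖(inner ℂ (T x) x : ℂ)‖ + ‖(inner ℂ (T x) z : ℂ)‖ := by
          rw [hzy]
          have h := norm_add_le ((q:ℂ) * (inner ℂ (T x) x : ℂ)) ((inner ℂ (T x) z : ℂ))
          rw [norm_mul, Complex.norm_real, Real.norm_eq_abs, abs_of_nonneg hq0] at h
          exact h
    _ ≤ q * (‖T‖/2) + ‖T‖ * s := by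
          gcongr
    _ = (q/2 + s) * ‖T‖ := by ring
  · positivity
end

section
/- Let T₂, T₃ be bounded linear operators on a complex Hilbert space H and q ∈ (0,1]. Then w_q([[0,T₂],[T₃,0]]) ≥ max{w_q(T₂), w_q(T₃)} − √(1 - 3q²/4 + q√(1-q²)) · min{‖T₂+T₃‖, ‖T₂-T₃‖}. -/
section Aux

variable {H : Type*} [NormedAddCommGroup H] [InnerProductSpace ℂ H]

lemma qSet_bddAbove (q : ℂ) (T : H →L[ℂ] H) :
    BddAbove {r : ℝ | ∃ x y : H, ‖x‖ = 1 ∧ ‖y‖ = 1 ∧ (inner ℂ x y : ℂ) = q ∧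
      r = ‖(inner ℂ (T x) y : ℂ)‖} := by
  refine ⟨‖T‖, ?_⟩
  rintro r ⟨x, y, hx, hy, -, rfl⟩
  calc ‖(inner ℂ (T x) y : ℂ)‖ ≤ ‖T x‖ * ‖y‖ := norm_inner_le_norm _ _
    _ ≤ ‖T‖ * ‖x‖ * ‖y‖ := by gcongr; exact T.le_opNorm x
    _ = ‖T‖ := by rw [hx, hy]; ring

lemma qNumRadius_nonneg (q : ℂ) (T : H →L[ℂ] H) : 0 ≤ qNumRadius q T := by
  apply Real.sSup_nonneg
  rintro r ⟨x, y, hx, hy, hxy, rfl⟩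
  positivity

/-- Key embedding: applying the block operator to `(α•x, β•x)`, `(α•y, β•y)`. -/
lemma block_elem (T₂ T₃ : H →L[ℂ] H) (q : ℂ) (α β : ℂ) (hαβ : ‖α‖ ^ 2 + ‖β‖ ^ 2 = 1)
    (x y : H) (hx : ‖x‖ = 1) (hy : ‖y‖ = 1) (hxy : (inner ℂ x y : ℂ) = q) :
    ‖(starRingEnd ℂ β * α) * (inner ℂ (T₂ x) y : ℂ)
        + (starRingEnd ℂ α * β) * (inner ℂ (T₃ x) y : ℂ)‖
      ≤ qNumRadius q (blockOp 0 T₂ T₃ 0) := by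
  set u : WithLp 2 (H × H) := (WithLp.equiv 2 (H × H)).symm (α • x, β • x) with hu
  set v : WithLp 2 (H × H) := (WithLp.equiv 2 (H × H)).symm (α • y, β • y) with hv
  have habc : (starRingEnd ℂ α * α + starRingEnd ℂ β * β) = 1 := by
    have h1 : starRingEnd ℂ α * α = (‖α‖ : ℂ) ^ 2 := RCLike.conj_mul α
    have h2 : starRingEnd ℂ β * β = (‖β‖ : ℂ) ^ 2 := RCLike.conj_mul β
    rw [h1, h2]
    exact_mod_cast congrArg (Complex.ofReal) hαβ
  have hnu : ‖u‖ = 1 := by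
    have h2 : ‖u‖ ^ 2 = 1 := by
      rw [hu, WithLp.prod_norm_sq_eq_of_L2]
      simp only [WithLp.equiv_symm_apply, WithLp.toLp_fst, WithLp.toLp_snd, norm_smul, hx, hy, mul_one]
      exact hαβ
    nlinarith [norm_nonneg u]
  have hnv : ‖v‖ = 1 := by
    have h2 : ‖v‖ ^ 2 = 1 := by
      rw [hv, WithLp.prod_norm_sq_eq_of_L2]
      simp only [WithLp.equiv_symm_apply, WithLp.toLp_fst, WithLp.toLp_snd, norm_smul, hx, hy, mul_one]
      exact hαβ
    nlinarith [norm_nonneg v]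
  have hiuv : (inner ℂ u v : ℂ) = q := by
    rw [hu, hv, WithLp.prod_inner_apply]
    simp only [WithLp.equiv_symm_apply, WithLp.toLp_fst, WithLp.toLp_snd, inner_smul_left,
      inner_smul_right, hxy]
    ring_nf
    linear_combination q * habc
  have hval : (inner ℂ (blockOp 0 T₂ T₃ 0 u) v : ℂ)
      = (starRingEnd ℂ β * α) * (inner ℂ (T₂ x) y : ℂ)
        + (starRingEnd ℂ α * β) * (inner ℂ (T₃ x) y : ℂ) := by
    rw [hu, hv]
    simp [blockOp, WithLp.prod_inner_apply, inner_smul_left, inner_smul_right]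
    ring
  rw [← hval]
  exact le_csSup (qSet_bddAbove q _) ⟨u, v, hnu, hnv, hiuv, rfl⟩

noncomputable def s2 : ℝ := (Real.sqrt 2)⁻¹

lemma s2_sq : s2 ^ 2 = 1 / 2 := by
  rw [s2, inv_pow, Real.sq_sqrt (by norm_num : (0:ℝ) ≤ 2)]
  norm_num

lemma s2_norm_sq : ‖((s2 : ℝ) : ℂ)‖ ^ 2 = 1 / 2 := by
  rw [Complex.norm_real, Real.norm_eq_abs, sq_abs, s2_sq]

lemma s2_mul_c : ((s2 : ℝ) : ℂ) * ((s2 : ℝ) : ℂ) = 1 / 2 := by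
  rw [← Complex.ofReal_mul, ← sq, s2_sq]
  push_cast
  ring

lemma block_ge_sum (T₂ T₃ : H →L[ℂ] H) (q : ℂ)
    (x y : H) (hx : ‖x‖ = 1) (hy : ‖y‖ = 1) (hxy : (inner ℂ x y : ℂ) = q) :
    ‖(inner ℂ (T₂ x) y : ℂ) + (inner ℂ (T₃ x) y : ℂ)‖ / 2
      ≤ qNumRadius q (blockOp 0 T₂ T₃ 0) := by
  have key := block_elem T₂ T₃ q ((s2 : ℝ) : ℂ) ((s2 : ℝ) : ℂ)
    (by rw [s2_norm_sq]; norm_num) x y hx hy hxy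
  have hc : (starRingEnd ℂ ((s2 : ℝ) : ℂ)) * ((s2 : ℝ) : ℂ) = (1 / 2 : ℂ) := by
    rw [Complex.conj_ofReal, s2_mul_c]
  rw [hc] at key
  calc ‖(inner ℂ (T₂ x) y : ℂ) + (inner ℂ (T₃ x) y : ℂ)‖ / 2
      = ‖(1 / 2 : ℂ) * (inner ℂ (T₂ x) y : ℂ) + (1 / 2 : ℂ) * (inner ℂ (T₃ x) y : ℂ)‖ := by
        rw [← mul_add, norm_mul]
        norm_num
        ring
    _ ≤ _ := key

lemma block_ge_diff (T₂ T₃ : H →L[ℂ] H) (q : ℂ)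
    (x y : H) (hx : ‖x‖ = 1) (hy : ‖y‖ = 1) (hxy : (inner ℂ x y : ℂ) = q) :
    ‖(inner ℂ (T₂ x) y : ℂ) - (inner ℂ (T₃ x) y : ℂ)‖ / 2
      ≤ qNumRadius q (blockOp 0 T₂ T₃ 0) := by
  have key := block_elem T₂ T₃ q ((s2 : ℝ) : ℂ) (Complex.I * ((s2 : ℝ) : ℂ))
    (by
      rw [norm_mul, Complex.norm_I, one_mul, s2_norm_sq]
      norm_num)
    x y hx hy hxy
  have hc1 : (starRingEnd ℂ (Complex.I * ((s2 : ℝ) : ℂ))) * ((s2 : ℝ) : ℂ)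
      = -(Complex.I / 2) := by
    rw [map_mul, Complex.conj_I, Complex.conj_ofReal, mul_assoc, s2_mul_c]
    ring
  have hc2 : (starRingEnd ℂ ((s2 : ℝ) : ℂ)) * (Complex.I * ((s2 : ℝ) : ℂ))
      = Complex.I / 2 := by
    rw [Complex.conj_ofReal,
      show ((s2 : ℝ) : ℂ) * (Complex.I * ((s2 : ℝ) : ℂ))
        = Complex.I * (((s2 : ℝ) : ℂ) * ((s2 : ℝ) : ℂ)) by ring, s2_mul_c]
    ring
  rw [hc1, hc2] at key
  calc ‖(inner ℂ (T₂ x) y : ℂ) - (inner ℂ (T₃ x) y : ℂ)‖ / 2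
      = ‖-(Complex.I / 2) * (inner ℂ (T₂ x) y : ℂ) + Complex.I / 2 * (inner ℂ (T₃ x) y : ℂ)‖ := by
        rw [show -(Complex.I / 2) * (inner ℂ (T₂ x) y : ℂ) + Complex.I / 2 * (inner ℂ (T₃ x) y : ℂ)
          = -(Complex.I / 2) * ((inner ℂ (T₂ x) y : ℂ) - (inner ℂ (T₃ x) y : ℂ)) by ring,
          norm_mul, norm_neg, norm_div, Complex.norm_I, Complex.norm_ofNat]
        ring
    _ ≤ _ := key

lemma inner_op_le (T : H →L[ℂ] H) {x y : H} (hx : ‖x‖ = 1) (hy : ‖y‖ = 1) :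
    ‖(inner ℂ (T x) y : ℂ)‖ ≤ ‖T‖ := by
  calc ‖(inner ℂ (T x) y : ℂ)‖ ≤ ‖T x‖ * ‖y‖ := norm_inner_le_norm _ _
    _ ≤ ‖T‖ * ‖x‖ * ‖y‖ := by gcongr; exact T.le_opNorm x
    _ = ‖T‖ := by rw [hx, hy]; ring

end Aux

theorem stmt16 {H : Type*} [NormedAddCommGroup H] [InnerProductSpace ℂ H] [CompleteSpace H]
    (T₂ T₃ : H →L[ℂ] H) (q : ℝ) (hq0 : 0 < q) (hq1 : q ≤ 1) :
    qNumRadius (q : ℂ) (blockOp 0 T₂ T₃ 0)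
      ≥ max (qNumRadius (q : ℂ) T₂) (qNumRadius (q : ℂ) T₃) -
        Real.sqrt (1 - 3 * q ^ 2 / 4 + q * Real.sqrt (1 - q ^ 2)) *
          min ‖T₂ + T₃‖ ‖T₂ - T₃‖ := by
  set W := qNumRadius (q : ℂ) (blockOp 0 T₂ T₃ 0) with hW
  set c := Real.sqrt (1 - 3 * q ^ 2 / 4 + q * Real.sqrt (1 - q ^ 2)) with hc
  set m := min ‖T₂ + T₃‖ ‖T₂ - T₃‖ with hm
  have hc2 : (1 : ℝ) / 2 ≤ c := by
    rw [hc]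
    rw [show (1 : ℝ) / 2 = Real.sqrt (1 / 4) by
      rw [show (1 : ℝ) / 4 = (1 / 2) ^ 2 by norm_num, Real.sqrt_sq (by norm_num)]]
    apply Real.sqrt_le_sqrt
    nlinarith [Real.sqrt_nonneg (1 - q ^ 2)]
  have hWnn : 0 ≤ W := qNumRadius_nonneg _ _
  have hmnn : 0 ≤ m := le_min (norm_nonneg _) (norm_nonneg _)
  have hgoal0 : 0 ≤ W + c * m := by
    have : 0 ≤ c := le_trans (by norm_num) hc2
    positivity
  rw [ge_iff_le, sub_le_iff_le_add]
  -- the common estimate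
  have hkey : ∀ x y : H, ‖x‖ = 1 → ‖y‖ = 1 → (inner ℂ x y : ℂ) = (q : ℂ) →
      ‖(inner ℂ (T₂ x) y : ℂ)‖ ≤ W + c * m ∧ ‖(inner ℂ (T₃ x) y : ℂ)‖ ≤ W + c * m := by
    intro x y hx hy hxy
    have hsum := block_ge_sum T₂ T₃ (q : ℂ) x y hx hy hxy
    have hdiff := block_ge_diff T₂ T₃ (q : ℂ) x y hx hy hxy
    have hS : ‖(inner ℂ (T₂ x) y : ℂ) + (inner ℂ (T₃ x) y : ℂ)‖ ≤ ‖T₂ + T₃‖ := by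
      have h := inner_op_le (T₂ + T₃) hx hy
      simpa [inner_add_left] using h
    have hD : ‖(inner ℂ (T₂ x) y : ℂ) - (inner ℂ (T₃ x) y : ℂ)‖ ≤ ‖T₂ - T₃‖ := by
      have h := inner_op_le (T₂ - T₃) hx hy
      simpa [inner_sub_left] using h
    have h2 : ‖(inner ℂ (T₂ x) y : ℂ)‖
        ≤ ‖(inner ℂ (T₂ x) y : ℂ) + (inner ℂ (T₃ x) y : ℂ)‖ / 2
          + ‖(inner ℂ (T₂ x) y : ℂ) - (inner ℂ (T₃ x) y : ℂ)‖ / 2 := by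
      have := norm_add_le ((inner ℂ (T₂ x) y : ℂ) + (inner ℂ (T₃ x) y : ℂ))
        ((inner ℂ (T₂ x) y : ℂ) - (inner ℂ (T₃ x) y : ℂ))
      have heq : ((inner ℂ (T₂ x) y : ℂ) + (inner ℂ (T₃ x) y : ℂ))
          + ((inner ℂ (T₂ x) y : ℂ) - (inner ℂ (T₃ x) y : ℂ)) = 2 * (inner ℂ (T₂ x) y : ℂ) := by ring
      rw [heq, norm_mul] at this
      simp only [Complex.norm_ofNat] at this
      linarith
    have h3 : ‖(inner ℂ (T₃ x) y : ℂ)‖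
        ≤ ‖(inner ℂ (T₂ x) y : ℂ) + (inner ℂ (T₃ x) y : ℂ)‖ / 2
          + ‖(inner ℂ (T₂ x) y : ℂ) - (inner ℂ (T₃ x) y : ℂ)‖ / 2 := by
      have := norm_sub_le ((inner ℂ (T₂ x) y : ℂ) + (inner ℂ (T₃ x) y : ℂ))
        ((inner ℂ (T₂ x) y : ℂ) - (inner ℂ (T₃ x) y : ℂ))
      have heq : ((inner ℂ (T₂ x) y : ℂ) + (inner ℂ (T₃ x) y : ℂ))
          - ((inner ℂ (T₂ x) y : ℂ) - (inner ℂ (T₃ x) y : ℂ)) = 2 * (inner ℂ (T₃ x) y : ℂ) := by ring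
      rw [heq, norm_mul] at this
      simp only [Complex.norm_ofNat] at this
      linarith
    have hbound : ‖(inner ℂ (T₂ x) y : ℂ) + (inner ℂ (T₃ x) y : ℂ)‖ / 2
          + ‖(inner ℂ (T₂ x) y : ℂ) - (inner ℂ (T₃ x) y : ℂ)‖ / 2 ≤ W + c * m := by
      rcases le_total ‖T₂ - T₃‖ ‖T₂ + T₃‖ with h | h
      · have hm' : m = ‖T₂ - T₃‖ := min_eq_right h
        calc _ ≤ W + ‖T₂ - T₃‖ / 2 := by
              have := hD
              linarith [hsum]
          _ ≤ W + c * m := by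
              rw [hm']
              have : ‖T₂ - T₃‖ / 2 ≤ c * ‖T₂ - T₃‖ := by nlinarith [norm_nonneg (T₂ - T₃)]
              linarith
      · have hm' : m = ‖T₂ + T₃‖ := min_eq_left h
        calc _ ≤ W + ‖T₂ + T₃‖ / 2 := by
              have := hS
              linarith [hdiff]
          _ ≤ W + c * m := by
              rw [hm']
              have : ‖T₂ + T₃‖ / 2 ≤ c * ‖T₂ + T₃‖ := by nlinarith [norm_nonneg (T₂ + T₃)]
              linarith
    exact ⟨le_trans h2 hbound, le_trans h3 hbound⟩
  apply max_le
  · apply Real.sSup_le _ hgoal0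
    rintro r ⟨x, y, hx, hy, hxy, rfl⟩
    exact (hkey x y hx hy hxy).1
  · apply Real.sSup_le _ hgoal0
    rintro r ⟨x, y, hx, hy, hxy, rfl⟩
    exact (hkey x y hx hy hxy).2
end
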